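/- The subword order on words over a finite alphabet is a well-quasi-order: every infinite sequence of words contains an increasing pair x_i ≼ x_j with i < j. -/

import Mathlib

/-- Higman's lemma: the subword order on words over a finite alphabet is a
well-quasi-order: every infinite sequence contains an increasing pair. -/
theorem sublist_wqo {α : Type*} [Finite α] (f : ℕ → List α) :
    ∃ i j : ℕ, i < j ∧ (f i).Sublist (f j) := by
  have h : (Set.univ : Set α).PartiallyWellOrderedOn (· = ·) :=
    Set.finite_univ.partiallyWellOrderedOn
  have H := h.partiallyWellOrderedOn_sublistForall₂ (· = ·)
  obtain ⟨i, j, hij, hs⟩ := H (fun n => ⟨f n, fun x _ => Set.mem_univ x⟩)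
  refine ⟨i, j, hij, ?_⟩
  replace hs : List.SublistForall₂ (· = ·) (f i) (f j) := hs
  rw [List.sublistForall₂_iff] at hs
  obtain ⟨l, h1, h2⟩ := hs
  have : f i = l := by rw [← List.forall₂_eq_eq_eq]; exact h1
  exact this ▸ h2
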